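/- arXiv:1710.10240 — 3 statements merged into one kernel-verified Lean document; each statement's English description precedes it below -/
import Mathlib

section
/- Let V be a complex inner product space and R a Kähler curvature form on V with positive orthogonal bisectional curvature. Then for any two orthonormal vectors x, y ∈ V the sum of holomorphic sectional curvatures is positive: Re R(x,x,x,x) + Re R(y,y,y,y) > 0. -/
/-- A Kähler curvature form on a complex inner product space `V`: a map
`R : V → V → V → V → ℂ` that is complex-linear in the first and third
arguments, conjugate-linear in the second and fourth arguments, and satisfies
the Kähler symmetries. -/
structure KahlerCurvatureForm (V : Type*) [NormedAddCommGroup V]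
    [InnerProductSpace ℂ V] where
  R : V → V → V → V → ℂ
  add_fst : ∀ x x' y z w, R (x + x') y z w = R x y z w + R x' y z w
  smul_fst : ∀ (c : ℂ) x y z w, R (c • x) y z w = c * R x y z w
  add_snd : ∀ x y y' z w, R x (y + y') z w = R x y z w + R x y' z w
  smul_snd : ∀ (c : ℂ) x y z w, R x (c • y) z w = (starRingEnd ℂ) c * R x y z w
  add_trd : ∀ x y z z' w, R x y (z + z') w = R x y z w + R x y z' w
  smul_trd : ∀ (c : ℂ) x y z w, R x y (c • z) w = c * R x y z w
  add_fth : ∀ x y z w w', R x y z (w + w') = R x y z w + R x y z w'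
  smul_fth : ∀ (c : ℂ) x y z w, R x y z (c • w) = (starRingEnd ℂ) c * R x y z w
  sym_fst_trd : ∀ x y z w, R x y z w = R z y x w
  sym_snd_fth : ∀ x y z w, R x y z w = R x w z y
  conj_sym : ∀ x y z w, R x y z w = (starRingEnd ℂ) (R y x w z)

/-- `R` has positive orthogonal bisectional curvature if `Re R(x,x,y,y) > 0`
for all nonzero orthogonal vectors `x, y`. -/
def KahlerCurvatureForm.PosOrthBisectional {V : Type*} [NormedAddCommGroup V]
    [InnerProductSpace ℂ V] (R : KahlerCurvatureForm V) : Prop :=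
  ∀ x y : V, x ≠ 0 → y ≠ 0 → inner ℂ x y = (0 : ℂ) → 0 < (R.R x x y y).re


namespace KahlerCurvatureForm

variable {V : Type*} [NormedAddCommGroup V] [InnerProductSpace ℂ V]
  (R : KahlerCurvatureForm V)

lemma neg_fst (x y z w : V) : R.R (-x) y z w = -R.R x y z w := by
  have h := R.smul_fst (-1) x y z w; simpa using h

lemma neg_snd (x y z w : V) : R.R x (-y) z w = -R.R x y z w := by
  have h := R.smul_snd (-1) x y z w; simpa using h

lemma neg_trd (x y z w : V) : R.R x y (-z) w = -R.R x y z w := by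
  have h := R.smul_trd (-1) x y z w; simpa using h

lemma neg_fth (x y z w : V) : R.R x y z (-w) = -R.R x y z w := by
  have h := R.smul_fth (-1) x y z w; simpa using h

end KahlerCurvatureForm

theorem stmt2 {V : Type*} [NormedAddCommGroup V] [InnerProductSpace ℂ V]
    (R : KahlerCurvatureForm V) (hR : R.PosOrthBisectional)
    (x y : V) (hx : ‖x‖ = 1) (hy : ‖y‖ = 1) (hxy : inner ℂ x y = (0 : ℂ)) :
    0 < (R.R x x x x).re + (R.R y y y y).re := by
  have hxx : inner ℂ x x = (1 : ℂ) := by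
    rw [inner_self_eq_norm_sq_to_K, hx]; norm_num
  have hyy : inner ℂ y y = (1 : ℂ) := by
    rw [inner_self_eq_norm_sq_to_K, hy]; norm_num
  have hyx : inner ℂ y x = (0 : ℂ) := by
    rw [← inner_conj_symm, hxy, map_zero]
  -- nonvanishing
  have h1ne : x + y ≠ 0 := by
    intro h
    have hy' : y = -x := eq_neg_of_add_eq_zero_right h
    rw [hy', inner_neg_right, hxx] at hxy
    norm_num at hxy
  have h2ne : x - y ≠ 0 := by
    intro h
    have hx' : x = y := sub_eq_zero.mp h
    rw [hx', hyy] at hxy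
    norm_num at hxy
  have h3ne : x + Complex.I • y ≠ 0 := by
    intro h
    have hy' : Complex.I • y = -x := eq_neg_of_add_eq_zero_right h
    have : (inner ℂ (Complex.I • y) x : ℂ) = inner ℂ (-x) x := by rw [hy']
    rw [inner_smul_left, hyx, inner_neg_left, hxx] at this
    norm_num at this
  have h4ne : x - Complex.I • y ≠ 0 := by
    intro h
    have hx' : x = Complex.I • y := sub_eq_zero.mp h
    have : (inner ℂ x x : ℂ) = inner ℂ (Complex.I • y) x := by rw [← hx']
    rw [inner_smul_left, hyx, hxx] at this
    norm_num at this
  -- orthogonality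
  have ho1 : inner ℂ (x + y) (x - y) = (0 : ℂ) := by
    rw [inner_sub_right, inner_add_left, inner_add_left, hxx, hyy, hxy, hyx]
    ring
  have ho2 : inner ℂ (x + Complex.I • y) (x - Complex.I • y) = (0 : ℂ) := by
    rw [inner_sub_right, inner_add_left, inner_add_left, inner_smul_left,
      inner_smul_right, inner_smul_right, inner_smul_left, hxx, hyy, hxy, hyx]
    simp [Complex.conj_I]
  have h1 := hR (x + y) (x - y) h1ne h2ne ho1
  have h2 := hR (x + Complex.I • y) (x - Complex.I • y) h3ne h4ne ho2
  have key : R.R (x + y) (x + y) (x - y) (x - y)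
      + R.R (x + Complex.I • y) (x + Complex.I • y)
        (x - Complex.I • y) (x - Complex.I • y)
      = 2 * R.R x x x x + 2 * R.R y y y y := by
    simp only [sub_eq_add_neg, R.add_fst, R.add_snd, R.add_trd, R.add_fth,
      R.neg_fst, R.neg_snd, R.neg_trd, R.neg_fth,
      R.smul_fst, R.smul_snd, R.smul_trd, R.smul_fth, Complex.conj_I]
    linear_combination (-1 + Complex.I) * R.sym_snd_fth x x x y
      + (-1 - Complex.I) * R.sym_fst_trd x x y x
      + 2 * R.sym_fst_trd x x y y
      + (-2) * R.sym_fst_trd x y y x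
      + (1 - Complex.I) * R.sym_fst_trd x y y y
      + (1 + Complex.I) * R.sym_snd_fth y x y y
      + (-R.R x x y y - R.R x y x y + R.R x y y x + R.R x y y y * Complex.I
          + R.R y x x y - R.R y x y x - R.R y x y y * Complex.I
          - R.R y y x x - R.R y y x y * Complex.I + R.R y y y x * Complex.I
          + R.R y y y y * (Complex.I ^ 2 - 1)) * Complex.I_sq
  have hre := congrArg Complex.re key
  norm_num [Complex.add_re, Complex.mul_re] at hre
  linarith
end

section
/- Let V be a complex inner product space of finite complex dimension n ≥ 2 and R a Kähler curvature form on V with positive orthogonal bisectional curvature. Then for any orthonormal basis e_1, …, e_n of V the sum of holomorphic sectional curvatures is positive: Σ_{α=1}^{n} Re R(e_α, e_α, e_α, e_α) > 0. -/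
private lemma kahler_key {V : Type*} [NormedAddCommGroup V] [InnerProductSpace ℂ V]
    (R : KahlerCurvatureForm V) (x y : V) :
    R.R (x+y) (x+y) (x-y) (x-y)
    + R.R (x+Complex.I•y) (x+Complex.I•y) (x-Complex.I•y) (x-Complex.I•y)
    = 2 * R.R x x x x + 2 * R.R y y y y := by
  have hsub : ∀ a b : V, a - b = a + (-1:ℂ) • b := by
    intro a b; rw [neg_one_smul]; exact sub_eq_add_neg a b
  rw [hsub, hsub, smul_smul]
  simp only [R.add_fst, R.add_snd, R.add_trd, R.add_fth, R.smul_fst, R.smul_snd,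
    R.smul_trd, R.smul_fth, map_neg, map_one, map_mul, Complex.conj_I]
  rw [R.sym_snd_fth x y x x, R.sym_fst_trd y x x x, R.sym_fst_trd x y y y,
    R.sym_snd_fth y x y y, R.sym_fst_trd x y y x, R.sym_fst_trd y x x y]
  ring_nf
  simp only [Complex.I_pow_four, Complex.I_sq]
  ring

private lemma kahler_two {V : Type*} [NormedAddCommGroup V] [InnerProductSpace ℂ V]
    (R : KahlerCurvatureForm V) (hR : R.PosOrthBisectional) (x y : V)
    (hx : inner ℂ x x = (1:ℂ)) (hy : inner ℂ y y = (1:ℂ)) (hxy : inner ℂ x y = (0:ℂ)) :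
    0 < (R.R x x x x).re + (R.R y y y y).re := by
  have hyx : inner ℂ y x = (0:ℂ) := by
    rw [← inner_conj_symm, hxy]; simp
  have hne : ∀ u : V, inner ℂ u u ≠ (0:ℂ) → u ≠ 0 := by
    intro u hu h0; exact hu (by rw [h0]; simp)
  have h1u : (x + y) ≠ 0 := by
    apply hne; simp only [inner_add_left, inner_add_right, hx, hy, hxy, hyx]; norm_num
  have h1v : (x - y) ≠ 0 := by
    apply hne; simp only [inner_sub_left, inner_sub_right, hx, hy, hxy, hyx]; norm_num
  have hi2u : inner ℂ (x + Complex.I • y) (x + Complex.I • y) = (2:ℂ) := by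
    simp only [inner_add_left, inner_add_right, inner_smul_left, inner_smul_right,
      hx, hy, hxy, hyx, Complex.conj_I, mul_zero, zero_mul, mul_one, add_zero, zero_add]
    ring_nf; rw [Complex.I_sq]; ring
  have hi2v : inner ℂ (x - Complex.I • y) (x - Complex.I • y) = (2:ℂ) := by
    simp only [inner_sub_left, inner_sub_right, inner_smul_left, inner_smul_right,
      hx, hy, hxy, hyx, Complex.conj_I, mul_zero, zero_mul, mul_one, sub_zero, zero_sub]
    ring_nf; rw [Complex.I_sq]; ring
  have h2u : (x + Complex.I • y) ≠ 0 := hne _ (by rw [hi2u]; norm_num)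
  have h2v : (x - Complex.I • y) ≠ 0 := hne _ (by rw [hi2v]; norm_num)
  have ho1 : inner ℂ (x + y) (x - y) = (0:ℂ) := by
    simp only [inner_add_left, inner_sub_right, hx, hy, hxy, hyx]; norm_num
  have ho2 : inner ℂ (x + Complex.I • y) (x - Complex.I • y) = (0:ℂ) := by
    simp only [inner_add_left, inner_sub_right, inner_smul_left, inner_smul_right,
      hx, hy, hxy, hyx, Complex.conj_I, mul_zero, zero_mul, mul_one]
    ring_nf
    rw [Complex.I_sq]; ring
  have p1 := hR _ _ h1u h1v ho1
  have p2 := hR _ _ h2u h2v ho2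
  have hkey := kahler_key R x y
  have hre := congrArg Complex.re hkey
  simp only [Complex.add_re, Complex.mul_re, Complex.re_ofNat, Complex.im_ofNat,
    zero_mul, sub_zero] at hre
  linarith

theorem stmt3 {V : Type*} [NormedAddCommGroup V] [InnerProductSpace ℂ V]
    {n : ℕ} (hn : 2 ≤ n)
    (R : KahlerCurvatureForm V) (hR : R.PosOrthBisectional)
    (e : OrthonormalBasis (Fin n) ℂ V) :
    0 < ∑ α : Fin n, (R.R (e α) (e α) (e α) (e α)).re := by
  have hNZ : NeZero n := ⟨by omega⟩
  have hon := e.orthonormal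
  rw [orthonormal_iff_ite] at hon
  set f : Fin n → ℝ := fun α => (R.R (e α) (e α) (e α) (e α)).re with hf
  have hpair : ∀ α : Fin n, 0 < f α + f (α + 1) := by
    intro α
    have hv1 : ((1 : Fin n) : ℕ) = 1 := by
      rw [Fin.val_one']; exact Nat.mod_eq_of_lt (by omega)
    have hne : α ≠ α + 1 := by
      intro h
      have h2 := congrArg Fin.val h
      rw [Fin.val_add, hv1] at h2
      have hlt := α.isLt
      rcases lt_or_ge ((α : ℕ) + 1) n with hc | hc
      · rw [Nat.mod_eq_of_lt hc] at h2; omega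
      · have hn1 : (α : ℕ) + 1 = n := by omega
        rw [hn1, Nat.mod_self] at h2; omega
    exact kahler_two R hR (e α) (e (α + 1))
      (by simpa using hon α α) (by simpa using hon (α+1) (α+1))
      (by simpa [hne] using hon α (α+1))
  have hsum : 0 < ∑ α : Fin n, (f α + f (α + 1)) :=
    Finset.sum_pos (fun α _ => hpair α) ⟨0, Finset.mem_univ 0⟩
  have hshift : ∑ α : Fin n, f (α + 1) = ∑ α : Fin n, f α :=
    Fintype.sum_equiv (Equiv.addRight 1) _ _ (fun α => rfl)
  rw [Finset.sum_add_distrib, hshift] at hsum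
  linarith
end

section
/- Let V be a complex inner product space of finite complex dimension n ≥ 2 and R a Kähler curvature form on V with positive orthogonal bisectional curvature. Then for any orthonormal basis e_1, …, e_n of V the scalar curvature is positive: Σ_{α=1}^{n} Σ_{β=1}^{n} Re R(e_α, e_α, e_β, e_β) > 0. -/
lemma KahlerCurvatureForm.key {V : Type*} [NormedAddCommGroup V]
    [InnerProductSpace ℂ V] (R : KahlerCurvatureForm V) (x y : V) :
    R.R (x+y) (x+y) (x-y) (x-y)
      + R.R (x+Complex.I•y) (x+Complex.I•y) (x-Complex.I•y) (x-Complex.I•y)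
    = 2*R.R x x x x + 2*R.R y y y y := by
  have e1 : x - y = x + ((-1:ℂ))•y := by
    simp [sub_eq_add_neg]
  have e2 : x - Complex.I•y = x + ((-Complex.I))•y := by
    simp [sub_eq_add_neg]
  rw [e1, e2]
  simp only [R.add_fst, R.add_snd, R.add_trd, R.add_fth,
    R.smul_fst, R.smul_snd, R.smul_trd, R.smul_fth]
  simp only [map_neg, map_one, Complex.conj_I]
  rw [show R.R x x x y = R.R x y x x from R.sym_snd_fth x x x y,
      show R.R y y x y = R.R x y y y from R.sym_fst_trd y y x y,
      show R.R x x y x = R.R y x x x from R.sym_fst_trd x x y x,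
      show R.R y y y x = R.R y x y y from R.sym_snd_fth y y y x,
      show R.R x x y y = R.R y x x y from R.sym_fst_trd x x y y,
      show R.R y y x x = R.R x y y x from R.sym_fst_trd y y x x]
  ring_nf
  simp only [Complex.I_sq, Complex.I_pow_four]
  ring

lemma diag_pair {V : Type*} [NormedAddCommGroup V] [InnerProductSpace ℂ V]
    (R : KahlerCurvatureForm V) (hR : R.PosOrthBisectional) {x y : V}
    (hx : (inner ℂ x x : ℂ) = 1) (hy : (inner ℂ y y : ℂ) = 1)
    (hxy : (inner ℂ x y : ℂ) = 0) :
    0 < (R.R x x x x).re + (R.R y y y y).re := by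
  have hyx : (inner ℂ y x : ℂ) = 0 := by
    rw [← inner_conj_symm, hxy, map_zero]
  have h1 : (inner ℂ (x + y) (x - y) : ℂ) = 0 := by
    simp [inner_add_left, inner_sub_right, hx, hy, hxy, hyx, -inner_self_eq_norm_sq_to_K]
  have h2 : (inner ℂ (x + Complex.I • y) (x - Complex.I • y) : ℂ) = 0 := by
    simp [inner_add_left, inner_sub_right, inner_smul_left, inner_smul_right,
      hx, hy, hxy, hyx, -inner_self_eq_norm_sq_to_K, Complex.conj_I]
  have n1 : x + y ≠ 0 := by
    intro h
    have : (inner ℂ (x + y) (x + y) : ℂ) = 2 := by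
      simp [inner_add_left, inner_add_right, hx, hy, hxy, hyx, -inner_self_eq_norm_sq_to_K]; ring
    rw [h] at this; simp at this
  have n2 : x - y ≠ 0 := by
    intro h
    have : (inner ℂ (x - y) (x - y) : ℂ) = 2 := by
      simp [inner_sub_left, inner_sub_right, hx, hy, hxy, hyx, -inner_self_eq_norm_sq_to_K]; ring
    rw [h] at this; simp at this
  have n3 : x + Complex.I • y ≠ 0 := by
    intro h
    have : (inner ℂ (x + Complex.I • y) (x + Complex.I • y) : ℂ) = 2 := by
      simp [inner_add_left, inner_add_right, inner_smul_left, inner_smul_right,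
        hx, hy, hxy, hyx, -inner_self_eq_norm_sq_to_K, Complex.conj_I]; ring
    rw [h] at this; simp at this
  have n4 : x - Complex.I • y ≠ 0 := by
    intro h
    have : (inner ℂ (x - Complex.I • y) (x - Complex.I • y) : ℂ) = 2 := by
      simp [inner_sub_left, inner_sub_right, inner_smul_left, inner_smul_right,
        hx, hy, hxy, hyx, -inner_self_eq_norm_sq_to_K, Complex.conj_I]; ring
    rw [h] at this; simp at this
  have p1 := hR _ _ n1 n2 h1
  have p2 := hR _ _ n3 n4 h2
  have hk := congrArg Complex.re (R.key x y)
  simp only [Complex.add_re, Complex.mul_re] at hk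
  norm_num at hk
  nlinarith [p1, p2, hk]

theorem stmt4 {V : Type*} [NormedAddCommGroup V] [InnerProductSpace ℂ V]
    {n : ℕ} (hn : 2 ≤ n)
    (R : KahlerCurvatureForm V) (hR : R.PosOrthBisectional)
    (e : OrthonormalBasis (Fin n) ℂ V) :
    0 < ∑ α : Fin n, ∑ β : Fin n, (R.R (e α) (e α) (e β) (e β)).re := by
  have hone : ∀ i j : Fin n, (inner ℂ (e i) (e j) : ℂ) = if i = j then 1 else 0 :=
    orthonormal_iff_ite.mp e.orthonormal
  have hne : ∀ i : Fin n, e i ≠ 0 := fun i => e.orthonormal.ne_zero i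
  set T : Fin n → Fin n → ℝ := fun α β => (R.R (e α) (e α) (e β) (e β)).re with hT
  have hoff : ∀ α β : Fin n, α ≠ β → 0 < T α β := by
    intro α β h
    exact hR _ _ (hne α) (hne β) (by rw [hone]; simp [h])
  have hpair : ∀ α β : Fin n, α ≠ β → 0 < T α α + T β β := by
    intro α β h
    exact diag_pair R hR (by rw [hone]; simp) (by rw [hone]; simp)
      (by rw [hone]; simp [h])
  obtain ⟨m, rfl⟩ : ∃ m, n = m + 2 := ⟨n - 2, by omega⟩
  have hdiag : 0 < ∑ α : Fin (m + 2), T α α := by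
    have h2 : 0 < ∑ α : Fin (m + 2), (T α α + T (α + 1) (α + 1)) := by
      apply Finset.sum_pos
      · intro α _
        apply hpair
        intro h
        exact one_ne_zero (left_eq_add.mp h)
      · exact Finset.univ_nonempty
    rw [Finset.sum_add_distrib] at h2
    have hsh : ∑ α : Fin (m + 2), T (α + 1) (α + 1) = ∑ α : Fin (m + 2), T α α :=
      Fintype.sum_equiv (Equiv.addRight (1 : Fin (m+2))) _ _ (fun α => rfl)
    rw [hsh] at h2
    linarith
  have hsplit : ∀ α : Fin (m + 2), ∑ β : Fin (m + 2), T α β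
      = T α α + ∑ β ∈ Finset.univ.erase α, T α β :=
    fun α => (Finset.add_sum_erase _ _ (Finset.mem_univ α)).symm
  calc (0:ℝ) < ∑ α : Fin (m + 2), T α α := hdiag
    _ ≤ ∑ α : Fin (m + 2), T α α + ∑ α : Fin (m + 2), ∑ β ∈ Finset.univ.erase α, T α β := by
        have : 0 ≤ ∑ α : Fin (m + 2), ∑ β ∈ Finset.univ.erase α, T α β := by
          apply Finset.sum_nonneg; intro α _
          apply Finset.sum_nonneg; intro β hβ
          exact le_of_lt (hoff α β (by simp at hβ; exact fun h => hβ h.symm))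
        linarith
    _ = ∑ α : Fin (m + 2), ∑ β : Fin (m + 2), T α β := by
        rw [← Finset.sum_add_distrib]
        exact Finset.sum_congr rfl (fun α _ => (hsplit α).symm)
end
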